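/- Fix γ > 0 and η ∈ (0, 1). The function g(z) = ((1+η)/2)·φ(z; γ) + ((1−η)/2)·φ(−z; γ), where φ is the smoothed hinge loss, attains its minimum at the unique point z* satisfying exp(−γ z*) = (−η·e^γ + √(η²·e^{2γ} + 1 − η²))/(1 + η), and moreover z* > 0. -/

import Mathlib

set_option maxHeartbeats 1000000 in
theorem conditional_risk_minimizer (γ η : ℝ) (hγ : 0 < γ) (hη : η ∈ Set.Ioo (0:ℝ) 1) :
    ∃! zs : ℝ,
      Real.exp (-(γ * zs)) =
        (-η * Real.exp γ + Real.sqrt (η ^ 2 * Real.exp (2 * γ) + 1 - η ^ 2)) / (1 + η) ∧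
      (∀ z : ℝ,
        ((1 + η) / 2) * ((1 / γ) * Real.log (1 + Real.exp (γ * (1 - zs)))) +
          ((1 - η) / 2) * ((1 / γ) * Real.log (1 + Real.exp (γ * (1 + zs)))) ≤
        ((1 + η) / 2) * ((1 / γ) * Real.log (1 + Real.exp (γ * (1 - z)))) +
          ((1 - η) / 2) * ((1 / γ) * Real.log (1 + Real.exp (γ * (1 + z))))) ∧
      0 < zs := by
  obtain ⟨hη0, hη1⟩ := hη
  obtain ⟨eγ, heγ⟩ : ∃ x, x = Real.exp γ := ⟨_, rfl⟩
  rw [← heγ]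
  have heγpos : 0 < eγ := heγ ▸ Real.exp_pos γ
  have heγ1 : 1 < eγ := by
    have := Real.add_one_le_exp γ; rw [← heγ] at this; linarith
  have h2γ : Real.exp (2 * γ) = eγ * eγ := by rw [heγ, two_mul, Real.exp_add]
  obtain ⟨s, hsdef⟩ : ∃ x, x = Real.sqrt (η ^ 2 * Real.exp (2 * γ) + 1 - η ^ 2) := ⟨_, rfl⟩
  rw [← hsdef]
  have hDpos : 0 < η ^ 2 * Real.exp (2 * γ) + 1 - η ^ 2 := by
    nlinarith [Real.exp_pos (2 * γ), sq_nonneg η]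
  have hsnn : 0 ≤ s := hsdef ▸ Real.sqrt_nonneg _
  have hs2 : s ^ 2 = η ^ 2 * (eγ * eγ) + 1 - η ^ 2 := by
    rw [hsdef, Real.sq_sqrt hDpos.le, h2γ]
  have hsgt : η * eγ < s := by nlinarith
  obtain ⟨c, hcdef⟩ : ∃ x, x = (-η * eγ + s) / (1 + η) := ⟨_, rfl⟩
  rw [← hcdef]
  have h1η : (0:ℝ) < 1 + η := by linarith
  have hcpos : 0 < c := by rw [hcdef]; exact div_pos (by linarith) h1η
  have h1 : (1 + η) * c = -η * eγ + s := by
    rw [hcdef]; field_simp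
  have hquad : (1 + η) * c ^ 2 + 2 * η * eγ * c - (1 - η) = 0 := by
    have hsq : ((1 + η) * c + η * eγ) ^ 2 = s ^ 2 := by rw [h1]; ring
    nlinarith [hsq, hs2]
  have hc1 : c < 1 := by
    rw [hcdef, div_lt_one h1η]
    have hlt : s < 1 + η + η * eγ := by
      rw [hsdef, show (1:ℝ) + η + η * eγ = η * eγ + (1 + η) by ring]
      rw [Real.sqrt_lt' (by nlinarith [mul_pos hη0 heγpos])]
      nlinarith [mul_pos hη0 heγpos, h2γ, Real.exp_pos (2*γ)]
    linarith
  obtain ⟨zs, hzsdef⟩ : ∃ x, x = -Real.log c / γ := ⟨_, rfl⟩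
  have hexpzs : Real.exp (-(γ * zs)) = c := by
    have : -(γ * zs) = Real.log c := by rw [hzsdef]; field_simp
    rw [this, Real.exp_log hcpos]
  have hzs : 0 < zs := by
    have hlog : Real.log c < 0 := Real.log_neg hcpos hc1
    rw [hzsdef]; exact div_pos (by linarith) hγ
  -- derivative setup
  set F : ℝ → ℝ := fun z =>
    ((1 + η) / 2) * ((1 / γ) * Real.log (1 + Real.exp (γ * (1 - z)))) +
      ((1 - η) / 2) * ((1 / γ) * Real.log (1 + Real.exp (γ * (1 + z)))) with hFdef
  set F' : ℝ → ℝ := fun z =>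
    -(((1 + η) / 2) * Real.exp (γ * (1 - z)) / (1 + Real.exp (γ * (1 - z)))) +
      ((1 - η) / 2) * Real.exp (γ * (1 + z)) / (1 + Real.exp (γ * (1 + z))) with hF'def
  have hF' : ∀ z : ℝ, HasDerivAt F (F' z) z := by
    intro z
    have d1 : HasDerivAt (fun x : ℝ => γ * (1 - x)) (-γ) z := by
      simpa using ((hasDerivAt_id z).const_sub (1:ℝ)).const_mul γ
    have d2 : HasDerivAt (fun x : ℝ => γ * (1 + x)) γ z := by
      simpa using ((hasDerivAt_id z).const_add (1:ℝ)).const_mul γ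
    have p1 : (0:ℝ) < 1 + Real.exp (γ * (1 - z)) := by positivity
    have p2 : (0:ℝ) < 1 + Real.exp (γ * (1 + z)) := by positivity
    have l1 : HasDerivAt (fun x : ℝ => Real.log (1 + Real.exp (γ * (1 - x))))
        ((Real.exp (γ * (1 - z)) * (-γ)) / (1 + Real.exp (γ * (1 - z)))) z :=
      (d1.exp.const_add 1).log p1.ne'
    have l2 : HasDerivAt (fun x : ℝ => Real.log (1 + Real.exp (γ * (1 + x))))
        ((Real.exp (γ * (1 + z)) * γ) / (1 + Real.exp (γ * (1 + z)))) z :=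
      (d2.exp.const_add 1).log p2.ne'
    have := ((l1.const_mul (1/γ)).const_mul ((1 + η) / 2)).add
      ((l2.const_mul (1/γ)).const_mul ((1 - η) / 2))
    refine this.congr_deriv (Eq.symm ?_)
    rw [hF'def]
    field_simp
  have hFdiff : Differentiable ℝ F := fun z => (hF' z).differentiableAt
  have hderiv : ∀ z, deriv F z = F' z := fun z => (hF' z).deriv
  -- sign of derivative
  have hx1 : ∀ z : ℝ, Real.exp (γ * (1 - z)) = eγ * Real.exp (-(γ * z)) := by
    intro z; rw [heγ, ← Real.exp_add]; congr 1; ring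
  have hx2 : ∀ z : ℝ, Real.exp (γ * (1 + z)) = eγ / Real.exp (-(γ * z)) := by
    intro z
    rw [heγ, eq_div_iff (Real.exp_pos _).ne', ← Real.exp_add]; congr 1; ring
  have hFform : ∀ z : ℝ, F' z =
      eγ * ((1 - η) / 2 - ((1 + η) / 2) * Real.exp (-(γ * z)) ^ 2
        - η * eγ * Real.exp (-(γ * z))) /
      ((1 + eγ * Real.exp (-(γ * z))) * (Real.exp (-(γ * z)) + eγ)) := by
    intro z
    have hu : 0 < Real.exp (-(γ * z)) := Real.exp_pos _
    rw [hF'def]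
    simp only [hx1 z, hx2 z]
    have p1 : (0:ℝ) < 1 + eγ * Real.exp (-(γ * z)) := by positivity
    have p2 : (0:ℝ) < Real.exp (-(γ * z)) + eγ := by positivity
    field_simp
    ring
  have hsign_pos : ∀ z, zs ≤ z → 0 ≤ F' z := by
    intro z hz
    have hu : 0 < Real.exp (-(γ * z)) := Real.exp_pos _
    have hule : Real.exp (-(γ * z)) ≤ c := by
      rw [← hexpzs]
      exact Real.exp_le_exp.mpr (by nlinarith)
    rw [hFform z]
    apply div_nonneg
    · have hfac : 0 ≤ (1 + η) * (c + Real.exp (-(γ * z))) + 2 * η * eγ := by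
        nlinarith [mul_pos h1η (add_pos hcpos hu), mul_pos hη0 heγpos]
      have hnum : 0 ≤ (1 - η) / 2 - ((1 + η) / 2) * Real.exp (-(γ * z)) ^ 2
          - η * eγ * Real.exp (-(γ * z)) := by
        nlinarith [hquad, mul_nonneg (sub_nonneg.mpr hule) hfac]
      nlinarith [mul_nonneg heγpos.le hnum]
    · positivity
  have hsign_neg : ∀ z, z ≤ zs → F' z ≤ 0 := by
    intro z hz
    have hu : 0 < Real.exp (-(γ * z)) := Real.exp_pos _
    have hule : c ≤ Real.exp (-(γ * z)) := by
      rw [← hexpzs]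
      exact Real.exp_le_exp.mpr (by nlinarith)
    rw [hFform z]
    apply div_nonpos_of_nonpos_of_nonneg
    · have hfac : 0 ≤ (1 + η) * (c + Real.exp (-(γ * z))) + 2 * η * eγ := by
        nlinarith [mul_pos h1η (add_pos hcpos hu), mul_pos hη0 heγpos]
      have hnum : (1 - η) / 2 - ((1 + η) / 2) * Real.exp (-(γ * z)) ^ 2
          - η * eγ * Real.exp (-(γ * z)) ≤ 0 := by
        nlinarith [hquad, mul_nonneg (sub_nonneg.mpr hule) hfac]
      nlinarith [mul_nonneg heγpos.le (neg_nonneg.mpr hnum)]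
    · positivity
  have hmin : ∀ z : ℝ, F zs ≤ F z := by
    have hmono : MonotoneOn F (Set.Ici zs) :=
      monotoneOn_of_deriv_nonneg (convex_Ici zs) hFdiff.continuous.continuousOn
        hFdiff.differentiableOn
        (fun x hx => by
          rw [hderiv]
          exact hsign_pos x (le_of_lt (by simpa [interior_Ici] using hx)))
    have hanti : AntitoneOn F (Set.Iic zs) :=
      antitoneOn_of_deriv_nonpos (convex_Iic zs) hFdiff.continuous.continuousOn
        hFdiff.differentiableOn
        (fun x hx => by
          rw [hderiv]
          exact hsign_neg x (le_of_lt (by simpa [interior_Iic] using hx)))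
    intro z
    rcases le_total z zs with h | h
    · exact hanti (Set.mem_Iic.mpr h) (Set.mem_Iic.mpr le_rfl) h
    · exact hmono (Set.mem_Ici.mpr le_rfl) (Set.mem_Ici.mpr h) h
  refine ⟨zs, ⟨hexpzs, hmin, hzs⟩, ?_⟩
  rintro y ⟨hy1, -, -⟩
  have : Real.exp (-(γ * y)) = Real.exp (-(γ * zs)) := by rw [hy1, hexpzs]
  have h2 : -(γ * y) = -(γ * zs) := Real.exp_eq_exp.mp this
  have := neg_injective h2
  exact mul_left_cancel₀ hγ.ne' this
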